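/- For nonnegative integers m₁, …, m_k, the integral over the standard simplex Δᵏ = {(t₀,…,t_k) : t_i ≥ 0, t₀ + … + t_k = 1} (parametrized by (t₁,…,t_k), with t₀ = 1 − t₁ − … − t_k) satisfies ∫_{Δᵏ} t₀^{m₁} (t₀+t₁)^{m₂} ⋯ (t₀+t₁+⋯+t_{k−1})^{m_k} dt₁ dt₂ ⋯ dt_k = 1 / ((m₁+1)(m₁+m₂+2)(m₁+m₂+m₃+3) ⋯ (m₁+⋯+m_k+k)). -/

import Mathlib

open MeasureTheory

private lemma filter_sum_cons {n : ℕ} (x : ℝ) (s : Fin n → ℝ) (j : Fin n) :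
    ∑ i ∈ Finset.univ.filter (fun i => j.succ ≤ i), Fin.cons x s i
      = ∑ i ∈ Finset.univ.filter (fun i => j ≤ i), s i := by
  rw [Finset.sum_filter, Finset.sum_filter, Fin.sum_univ_succ]
  simp [Fin.succ_le_succ_iff, Fin.le_zero_iff, Fin.succ_ne_zero]

private lemma sum_Iic_succ {n : ℕ} (m : Fin (n + 1) → ℕ) (j : Fin n) :
    ∑ i ∈ Finset.Iic j.succ, m i = m 0 + ∑ i ∈ Finset.Iic j, m i.succ := by
  have h : Finset.Iic j.succ
      = insert (0 : Fin (n + 1)) ((Finset.Iic j).map ⟨Fin.succ, Fin.succ_injective n⟩) := by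
    ext i
    simp only [Finset.mem_insert, Finset.mem_map, Finset.mem_Iic, Function.Embedding.coeFn_mk]
    constructor
    · intro hi
      rcases Fin.eq_zero_or_eq_succ i with h0 | ⟨i', rfl⟩
      · exact Or.inl h0
      · exact Or.inr ⟨i', Fin.succ_le_succ_iff.mp hi, rfl⟩
    · rintro (rfl | ⟨i', hi', rfl⟩)
      · exact Fin.zero_le _
      · exact Fin.succ_le_succ_iff.mpr hi'
  rw [h, Finset.sum_insert (by simp [Fin.succ_ne_zero, eq_comm]), Finset.sum_map]
  rfl

private lemma isCompact_simplexSet (k : ℕ) :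
    IsCompact {t : Fin k → ℝ | (∀ i, 0 ≤ t i) ∧ ∑ i, t i ≤ 1} := by
  refine IsCompact.of_isClosed_subset (isCompact_Icc (a := (0 : Fin k → ℝ)) (b := 1)) ?_ ?_
  · have : {t : Fin k → ℝ | (∀ i, 0 ≤ t i) ∧ ∑ i, t i ≤ 1}
        = (⋂ i, {t : Fin k → ℝ | 0 ≤ t i}) ∩ {t | ∑ i, t i ≤ 1} := by
      ext t; simp [Set.mem_iInter]
    rw [this]
    exact (isClosed_iInter fun i => isClosed_le continuous_const (continuous_apply i)).inter
      (isClosed_le (continuous_finset_sum _ fun i _ => continuous_apply i) continuous_const)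
  · intro t ht
    rw [Set.mem_Icc]
    constructor
    · intro i; exact ht.1 i
    · intro i
      calc t i ≤ ∑ j, t j := Finset.single_le_sum (fun j _ => ht.1 j) (Finset.mem_univ i)
        _ ≤ 1 := ht.2

private lemma isClosed_simplexSet (k : ℕ) :
    IsClosed {t : Fin k → ℝ | (∀ i, 0 ≤ t i) ∧ ∑ i, t i ≤ 1} := by
  have : {t : Fin k → ℝ | (∀ i, 0 ≤ t i) ∧ ∑ i, t i ≤ 1}
      = (⋂ i, {t : Fin k → ℝ | 0 ≤ t i}) ∩ {t | ∑ i, t i ≤ 1} := by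
    ext t; simp [Set.mem_iInter]
  rw [this]
  exact (isClosed_iInter fun i => isClosed_le continuous_const (continuous_apply i)).inter
    (isClosed_le (continuous_finset_sum _ fun i _ => continuous_apply i) continuous_const)

private lemma continuous_simplexIntegrand {k : ℕ} (m : Fin k → ℕ) :
    Continuous fun t : Fin k → ℝ =>
      ∏ j : Fin k, (1 - ∑ i ∈ Finset.univ.filter (fun i => j ≤ i), t i) ^ (m j) :=
  continuous_finset_prod _ fun j _ =>
    (continuous_const.sub (continuous_finset_sum _ fun i _ => continuous_apply i)).pow _

/-- **The simplex integral computing the constants `C_m` of the Connes–Moscovici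
local index formula.**  For nonnegative integers `m₁, …, m_k`, integrating over the
standard simplex `Δᵏ = {t₀ + ⋯ + t_k = 1, tᵢ ≥ 0}` in the coordinates `(t₁, …, t_k)`
(so `t₀ = 1 − t₁ − ⋯ − t_k` and `t₀ + ⋯ + t_{j-1} = 1 − (t_j + ⋯ + t_k)`),
`∫_{Δᵏ} t₀^{m₁} (t₀+t₁)^{m₂} ⋯ (t₀+⋯+t_{k−1})^{m_k} dt₁ ⋯ dt_k
 = 1 / ((m₁+1)(m₁+m₂+2) ⋯ (m₁+⋯+m_k+k))`.
Here the tuple `t : Fin k → ℝ` lists `(t₁, …, t_k)`, and the `j`-th factor of the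
integrand, `t₀ + ⋯ + t_{j-1}` (raised to the power `m_j`), is written as
`1 − Σ_{i ≥ j} tᵢ`. -/
theorem simplex_integral_CM (k : ℕ) (m : Fin k → ℕ) :
    (∫ t in {t : Fin k → ℝ | (∀ i, 0 ≤ t i) ∧ ∑ i, t i ≤ 1},
        ∏ j : Fin k, (1 - ∑ i ∈ Finset.univ.filter (fun i => j ≤ i), t i) ^ (m j)) =
      (∏ j : Fin k, ((∑ i ∈ Finset.Iic j, m i) + (j : ℕ) + 1 : ℝ))⁻¹ := by
  induction k with
  | zero =>
    have hs : {t : Fin 0 → ℝ | (∀ i, 0 ≤ t i) ∧ ∑ i, t i ≤ 1} = Set.univ := by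
      ext t; simp
    rw [hs]
    simp [MeasureTheory.volume_pi, Measure.pi_univ, measureReal_def]
  | succ n ih =>
    classical
    set S : Set (Fin (n + 1) → ℝ) := {t | (∀ i, 0 ≤ t i) ∧ ∑ i, t i ≤ 1} with hS
    set F : (Fin (n + 1) → ℝ) → ℝ := fun t =>
      ∏ j : Fin (n + 1), (1 - ∑ i ∈ Finset.univ.filter (fun i => j ≤ i), t i) ^ (m j) with hF
    set G : (Fin n → ℝ) → ℝ := fun s =>
      ∏ j : Fin n, (1 - ∑ i ∈ Finset.univ.filter (fun i => j ≤ i), s i) ^ (m j.succ) with hG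
    set S' : Set (Fin n → ℝ) := {s | (∀ i, 0 ≤ s i) ∧ ∑ i, s i ≤ 1} with hS'
    have hSmeas : MeasurableSet S := (isClosed_simplexSet (n + 1)).measurableSet
    have hS'meas : MeasurableSet S' := (isClosed_simplexSet n).measurableSet
    have hInt : Integrable (S.indicator F) := by
      rw [integrable_indicator_iff hSmeas]
      exact ((continuous_simplexIntegrand m).continuousOn).integrableOn_compact
        (isCompact_simplexSet (n + 1))
    set e := MeasurableEquiv.piFinSuccAbove (fun _ : Fin (n + 1) => ℝ) 0 with he
    have hmp : MeasurePreserving e := volume_preserving_piFinSuccAbove (fun _ => ℝ) 0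
    have e_symm : ∀ (x : ℝ) (s : Fin n → ℝ), e.symm (x, s) = Fin.cons x s := by
      intro x s
      show (Fin.insertNthEquiv (fun _ => ℝ) 0) (x, s) = Fin.cons x s
      simp [Fin.insertNthEquiv, Fin.insertNth_zero']
    -- pass to the product space
    rw [← MeasureTheory.integral_indicator hSmeas]
    rw [← (hmp.symm e).integral_comp' (S.indicator F)]
    have hInt' : Integrable (fun p : ℝ × (Fin n → ℝ) => S.indicator F (e.symm p)) :=
      ((hmp.symm e).integrable_comp_emb e.symm.measurableEmbedding).2 hInt
    rw [MeasureTheory.Measure.volume_eq_prod] at hInt' ⊢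
    rw [MeasureTheory.integral_prod_symm _ hInt']
    simp only [e_symm]
    -- compute the inner integral
    have hcons_sum : ∀ (x : ℝ) (s : Fin n → ℝ), ∑ i, Fin.cons x s i = x + ∑ i, s i := by
      intro x s; exact Fin.sum_cons x s
    have hFcons : ∀ (x : ℝ) (s : Fin n → ℝ),
        F (Fin.cons x s) = (1 - (x + ∑ i, s i)) ^ (m 0) * G s := by
      intro x s
      simp only [hF]
      rw [Fin.prod_univ_succ]
      congr 1
      · rw [show Finset.univ.filter (fun i => (0 : Fin (n + 1)) ≤ i) = Finset.univ from
          Finset.filter_true_of_mem fun i _ => Fin.zero_le i, hcons_sum]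
      · exact Finset.prod_congr rfl fun j _ => by rw [filter_sum_cons]
    have hmem : ∀ (x : ℝ) (s : Fin n → ℝ), Fin.cons x s ∈ S →
        (s ∈ S' ∧ x ∈ Set.Icc 0 (1 - ∑ i, s i)) := by
      intro x s hx
      have h0 : 0 ≤ x := by simpa using hx.1 0
      have hi : ∀ i, 0 ≤ s i := fun i => by simpa using hx.1 i.succ
      have hsum : x + ∑ i, s i ≤ 1 := by rw [← hcons_sum]; exact hx.2
      exact ⟨⟨hi, by linarith⟩, ⟨h0, by linarith⟩⟩
    have claim : ∀ s : Fin n → ℝ,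
        (∫ x, S.indicator F (Fin.cons x s)) =
          S'.indicator (fun s =>
            ((m 0 : ℝ) + 1)⁻¹ * ((1 - ∑ i, s i) ^ (m 0 + 1) * G s)) s := by
      intro s
      by_cases hs : s ∈ S'
      · have ha : (0 : ℝ) ≤ 1 - ∑ i, s i := by
          have := hs.2; linarith
        have hmem' : ∀ x : ℝ, (Fin.cons x s ∈ S) ↔ x ∈ Set.Icc 0 (1 - ∑ i, s i) := by
          intro x
          constructor
          · intro hx; exact (hmem x s hx).2
          · intro hx
            refine ⟨?_, ?_⟩
            · intro i
              refine Fin.cases ?_ ?_ i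
              · simpa using hx.1
              · intro i'; simpa using hs.1 i'
            · rw [hcons_sum]
              have := hx.2; linarith
        have hrw : (fun x => S.indicator F (Fin.cons x s)) =
            (Set.Icc 0 (1 - ∑ i, s i)).indicator
              (fun x => (1 - (x + ∑ i, s i)) ^ (m 0) * G s) := by
          funext x
          by_cases hx : x ∈ Set.Icc 0 (1 - ∑ i, s i)
          · rw [Set.indicator_of_mem ((hmem' x).2 hx), Set.indicator_of_mem hx, hFcons]
          · rw [Set.indicator_of_notMem (fun h => hx ((hmem' x).1 h)),
              Set.indicator_of_notMem hx]
        rw [hrw, MeasureTheory.integral_indicator measurableSet_Icc,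
          MeasureTheory.integral_mul_const, Set.indicator_of_mem hs]
        have hre : ∀ x : ℝ, (1 - (x + ∑ i, s i)) ^ (m 0)
            = (fun y => y ^ (m 0)) ((1 - ∑ i, s i) - x) := by
          intro x; congr 1; ring
        simp only [hre]
        rw [MeasureTheory.integral_Icc_eq_integral_Ioc,
          ← intervalIntegral.integral_of_le ha,
          intervalIntegral.integral_comp_sub_left (fun y => y ^ (m 0)) (1 - ∑ i, s i)]
        simp only [sub_self, sub_zero]
        rw [integral_pow]
        have hne : ((m 0 : ℝ) + 1) ≠ 0 := by positivity
        field_simp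
        rw [zero_pow (Nat.succ_ne_zero _), sub_zero]
      · have hz : ∀ x : ℝ, Fin.cons x s ∉ S := fun x hx => hs (hmem x s hx).1
        simp only [Set.indicator_of_notMem (hz _), Set.indicator_of_notMem hs,
          integral_zero]
    simp only [claim]
    rw [MeasureTheory.integral_indicator hS'meas, MeasureTheory.integral_const_mul]
    -- combine exponents
    set m' : Fin n → ℕ := fun j => m j.succ + if (j : ℕ) = 0 then m 0 + 1 else 0 with hm'
    have hcombine : ∀ s : Fin n → ℝ,
        (1 - ∑ i, s i) ^ (m 0 + 1) * G s
          = ∏ j : Fin n, (1 - ∑ i ∈ Finset.univ.filter (fun i => j ≤ i), s i) ^ (m' j) := by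
      intro s
      rcases Nat.eq_zero_or_pos n with hn | hn
      · subst hn
        simp [hG]
      · have : NeZero n := ⟨hn.ne'⟩
        simp only [hm', pow_add, Finset.prod_mul_distrib]
        rw [hG]
        rw [mul_comm]
        congr 1
        have : ∀ j : Fin n, ((j : ℕ) = 0) = (j = 0) := by
          intro j; exact propext Fin.val_eq_zero_iff
        simp only [this]
        have : ∀ j : Fin n,
            (1 - ∑ i ∈ Finset.univ.filter (fun i => j ≤ i), s i) ^
              (if j = 0 then m 0 + 1 else 0)
            = if j = 0 then (1 - ∑ i ∈ Finset.univ.filter (fun i => j ≤ i), s i) ^ (m 0 + 1)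
              else 1 := by
          intro j
          by_cases h : j = 0 <;> simp [h]
        simp only [this]
        rw [Finset.prod_ite_eq' Finset.univ (0 : Fin n)
          (fun j => (1 - ∑ i ∈ Finset.univ.filter (fun i => j ≤ i), s i) ^ (m 0 + 1))]
        simp only [Finset.mem_univ, if_true]
        rw [show Finset.univ.filter (fun i => (0 : Fin n) ≤ i) = Finset.univ from
          Finset.filter_true_of_mem fun i _ => Fin.zero_le i]
        ring
    have hIH : (∫ s in S', (1 - ∑ i, s i) ^ (m 0 + 1) * G s)
        = (∏ j : Fin n, ((∑ i ∈ Finset.Iic j, m' i) + (j : ℕ) + 1 : ℝ))⁻¹ := by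
      rw [show (fun s : Fin n → ℝ => (1 - ∑ i, s i) ^ (m 0 + 1) * G s)
          = fun s => ∏ j : Fin n,
              (1 - ∑ i ∈ Finset.univ.filter (fun i => j ≤ i), s i) ^ (m' j) from
        funext hcombine]
      exact ih m'
    rw [hIH]
    -- final product identity
    have hprod : ∏ j : Fin (n + 1), ((∑ i ∈ Finset.Iic j, m i) + (j : ℕ) + 1 : ℝ)
        = ((m 0 : ℝ) + 1) * ∏ j : Fin n, ((∑ i ∈ Finset.Iic j, m' i) + (j : ℕ) + 1 : ℝ) := by
      rw [Fin.prod_univ_succ]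
      congr 1
      · have h0 : Finset.Iic (0 : Fin (n + 1)) = {0} := by
          ext i; simp [Fin.le_zero_iff]
        simp [h0]
      · refine Finset.prod_congr rfl fun j _ => ?_
        have : NeZero n := ⟨(j.pos).ne'⟩
        have hsum : ∑ i ∈ Finset.Iic j, m' i
            = (∑ i ∈ Finset.Iic j, m i.succ) + (m 0 + 1) := by
          rw [hm']
          rw [Finset.sum_add_distrib]
          congr 1
          have : ∀ i : Fin n, ((i : ℕ) = 0) = (i = 0) := by
            intro i; exact propext Fin.val_eq_zero_iff
          simp only [this]
          rw [Finset.sum_ite_eq' (Finset.Iic j) (0 : Fin n) (fun _ => m 0 + 1)]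
          simp [Fin.zero_le j]
        have hsum2 : ∑ i ∈ Finset.Iic j.succ, m i = m 0 + ∑ i ∈ Finset.Iic j, m i.succ :=
          sum_Iic_succ m j
        rw [hsum, hsum2, Fin.val_succ]
        push_cast
        ring
    rw [hprod, mul_inv]
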